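/- Let G be a Hausdorff topological group, let K be a compact open subgroup of G and let H be a compact subgroup of G. Then L := ⋂_{h ∈ H} hKh⁻¹ is a compact open subgroup of G satisfying hLh⁻¹ = L for all h ∈ H (in fact L equals a finite intersection ⋂_{i=1}^{s} h_iKh_i⁻¹ for suitable h_1,…,h_s ∈ H), and the set LH = { lh : l ∈ L, h ∈ H } is a compact open subgroup of G containing H. -/

import Mathlib

open scoped Pointwise

/-- If `K` is a compact open subgroup and `H` a compact subgroup of a Hausdorff topological
group `G`, then `L = ⋂_{h ∈ H} hKh⁻¹` is a compact open subgroup, normalized by `H`,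
equal to a finite intersection of conjugates of `K` by elements of `H`, and `LH` is a
compact open subgroup of `G` containing `H`. -/
theorem compact_open_subgroup_inter_conjugates
    (G : Type*) [Group G] [TopologicalSpace G] [IsTopologicalGroup G] [T2Space G]
    (K H : Subgroup G)
    (hKc : IsCompact (K : Set G)) (hKo : IsOpen (K : Set G))
    (hHc : IsCompact (H : Set G))
    (L : Subgroup G)
    (hL : L = ⨅ h : H, Subgroup.map (MulAut.conj (h : G)).toMonoidHom K) :
    (IsCompact (L : Set G) ∧ IsOpen (L : Set G)) ∧
    (∀ h ∈ H, Subgroup.map (MulAut.conj h).toMonoidHom L = L) ∧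
    (∃ s : Finset G, s.Nonempty ∧ (∀ h ∈ s, h ∈ H) ∧
      L = ⨅ h ∈ s, Subgroup.map (MulAut.conj h).toMonoidHom K) ∧
    (∃ M : Subgroup G, (M : Set G) = (L : Set G) * (H : Set G) ∧
      IsCompact (M : Set G) ∧ IsOpen (M : Set G) ∧ H ≤ M) := by
  classical
  set C : G → Subgroup G := fun g => Subgroup.map (MulAut.conj g).toMonoidHom K with hC
  set N := Subgroup.normalizer (K : Set G) with hN
  have hNo : IsOpen (N : Set G) := Subgroup.isOpen_mono Subgroup.le_normalizer hKo
  -- membership in C g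
  have hmemC : ∀ g x : G, x ∈ C g ↔ ∃ k ∈ K, g * k * g⁻¹ = x := by
    intro g x
    simp [hC, Subgroup.mem_map]
  -- C is invariant under right multiplication by normalizer elements
  have hCco : ∀ g n : G, n ∈ N → C (g * n) = C g := by
    intro g n hn
    ext x
    rw [hmemC, hmemC]
    constructor
    · rintro ⟨k, hk, rfl⟩
      exact ⟨n * k * n⁻¹, (Subgroup.mem_normalizer_iff.mp hn k).mp hk, by group⟩
    · rintro ⟨k, hk, rfl⟩
      refine ⟨n⁻¹ * k * n, ?_, by group⟩
      have := (Subgroup.mem_normalizer_iff.mp (inv_mem hn) k).mp hk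
      simpa using this
  have hC1 : C 1 = K := by
    ext x; rw [hmemC]; simp
  -- topological properties of C g
  have hCset : ∀ g : G, (C g : Set G) =
      ((Homeomorph.mulLeft g).trans (Homeomorph.mulRight g⁻¹)) '' (K : Set G) := by
    intro g
    ext x
    simp only [SetLike.mem_coe, Set.mem_image, Homeomorph.trans_apply,
      Homeomorph.coe_mulLeft, Homeomorph.coe_mulRight]
    rw [hmemC]
  have hCo : ∀ g : G, IsOpen (C g : Set G) := by
    intro g
    rw [hCset]
    exact (Homeomorph.isOpenMap _) _ hKo
  -- the finite subcover
  have hcov : (H : Set G) ⊆ ⋃ h : H, (h : G) • (N : Set G) := by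
    intro x hx
    exact Set.mem_iUnion.2 ⟨⟨x, hx⟩, ⟨1, one_mem N, by simp⟩⟩
  obtain ⟨t, ht⟩ := hHc.elim_finite_subcover (fun h : H => (h : G) • (N : Set G))
    (fun h => hNo.smul _) hcov
  set s : Finset G := insert (1 : G) (t.image Subtype.val) with hs
  have hsH : ∀ h ∈ s, h ∈ H := by
    intro h hh
    rw [hs] at hh
    rcases Finset.mem_insert.mp hh with rfl | hh
    · exact one_mem H
    · obtain ⟨a, _, rfl⟩ := Finset.mem_image.mp hh
      exact a.2
  have hLs : L = ⨅ h ∈ s, C h := by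
    apply le_antisymm
    · refine le_iInf₂ fun h hh => ?_
      rw [hL]
      exact iInf_le (fun h : H => C h) ⟨h, hsH h hh⟩
    · rw [hL]
      refine le_iInf fun x => ?_
      obtain ⟨i, hi, hx⟩ := Set.mem_iUnion₂.mp (ht x.2)
      obtain ⟨n, hn, hxn⟩ := hx
      have hxeq : (x : G) = (i : G) * n := by
        rw [← hxn]; rfl
      have hmem : (i : G) ∈ s := by
        rw [hs]
        exact Finset.mem_insert_of_mem (Finset.mem_image.mpr ⟨i, hi, rfl⟩)
      have : C (x : G) = C (i : G) := by rw [hxeq, hCco _ _ hn]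
      show ⨅ h ∈ s, C h ≤ C (x : G)
      rw [this]
      exact iInf₂_le (i : G) hmem
  have hLK : L ≤ K := by
    have : L ≤ C 1 := by
      rw [hL]; exact iInf_le (fun h : H => C h) ⟨1, one_mem H⟩
    rwa [hC1] at this
  -- open
  have hLo : IsOpen (L : Set G) := by
    rw [hLs]
    have : ((⨅ h ∈ s, C h : Subgroup G) : Set G) = ⋂ h ∈ s, (C h : Set G) := by
      simp [Subgroup.coe_iInf]
    rw [this]
    exact isOpen_biInter_finset fun h _ => hCo h
  have hLc : IsCompact (L : Set G) :=
    hKc.of_isClosed_subset (L.isClosed_of_isOpen hLo) hLK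
  -- normalization
  have hnorm : ∀ h ∈ H, ∀ l ∈ L, h * l * h⁻¹ ∈ L := by
    intro h hh l hl
    rw [hL] at hl ⊢
    rw [Subgroup.mem_iInf] at hl ⊢
    intro x
    have := hl ⟨h⁻¹ * x, mul_mem (inv_mem hh) x.2⟩
    rw [hmemC] at this ⊢
    obtain ⟨k, hk, hke⟩ := this
    refine ⟨k, hk, ?_⟩
    simp only at hke
    rw [← hke]
    group
  have hmap : ∀ h ∈ H, Subgroup.map (MulAut.conj h).toMonoidHom L = L := by
    intro h hh
    apply le_antisymm
    · rintro x ⟨l, hl, rfl⟩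
      simpa using hnorm h hh l hl
    · intro l hl
      refine ⟨h⁻¹ * l * h, ?_, by simp; group⟩
      have := hnorm h⁻¹ (inv_mem hh) l hl
      simpa using this
  refine ⟨⟨hLc, hLo⟩, hmap, ⟨s, ⟨1, by rw [hs]; exact Finset.mem_insert_self _ _⟩, hsH, hLs⟩, ?_⟩
  refine ⟨{ carrier := (L : Set G) * (H : Set G)
            one_mem' := ⟨1, one_mem L, 1, one_mem H, one_mul 1⟩
            mul_mem' := ?_
            inv_mem' := ?_ }, rfl, ?_, ?_, ?_⟩
  · rintro a b ⟨l1, hl1, h1, hh1, rfl⟩ ⟨l2, hl2, h2, hh2, rfl⟩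
    exact ⟨l1 * (h1 * l2 * h1⁻¹), mul_mem hl1 (hnorm h1 hh1 l2 hl2),
      h1 * h2, mul_mem hh1 hh2, by group⟩
  · rintro a ⟨l, hl, h, hh, rfl⟩
    exact ⟨h⁻¹ * l⁻¹ * h, by simpa using hnorm h⁻¹ (inv_mem hh) l⁻¹ (inv_mem hl),
      h⁻¹, inv_mem hh, by group⟩
  · exact hLc.mul hHc
  · exact hLo.mul_right
  · intro h hh
    exact ⟨1, one_mem L, h, hh, one_mul h⟩
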